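/- Let H be a symmetric positive semidefinite d×d matrix with αH ≤ I for some α > 0, and θ* ∈ ℝᵈ. Define a_k = (I - (I - αH)^k) θ* for k ≥ 0 and ā_k = (a₀ + ⋯ + a_{k-1})/k. Then for every k ≥ 1, (ā_k - θ*)ᵀ H (ā_k - θ*) ≤ ‖θ*‖²/(α k). -/

import Mathlib

open Matrix Finset

lemma psd_smul {d : ℕ} {H : Matrix (Fin d) (Fin d) ℝ} (hH : H.PosSemidef)
    {α : ℝ} (hα : 0 ≤ α) : (α • H).PosSemidef := by
  refine Matrix.PosSemidef.of_dotProduct_mulVec_nonneg ?_ ?_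
  · show (α • H)ᴴ = α • H
    rw [conjTranspose_smul, hH.isHermitian.eq, star_trivial]
  · intro x
    rw [Matrix.smul_mulVec, dotProduct_smul, smul_eq_mul]
    exact mul_nonneg hα (hH.dotProduct_mulVec_nonneg x)

lemma sum_mulVec' {d k : ℕ} (A : ℕ → Matrix (Fin d) (Fin d) ℝ) (v : Fin d → ℝ) :
    (∑ i ∈ Finset.range k, A i) *ᵥ v = ∑ i ∈ Finset.range k, A i *ᵥ v := by
  ext x
  simp only [Matrix.mulVec, dotProduct, Finset.sum_apply, Matrix.sum_apply, Finset.sum_mul]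
  rw [Finset.sum_comm]

open scoped MatrixOrder in
lemma one_sub_pow_psd {d : ℕ} {B : Matrix (Fin d) (Fin d) ℝ}
    (hB : B.PosSemidef) (h1B : ((1 : Matrix (Fin d) (Fin d) ℝ) - B).PosSemidef) :
    ∀ i : ℕ, ((1 : Matrix (Fin d) (Fin d) ℝ) - B ^ i).PosSemidef := by
  intro i
  induction i with
  | zero => simpa using (Matrix.PosSemidef.zero (n := Fin d) (R := ℝ))
  | succ n ih =>
    have key : (1 : Matrix (Fin d) (Fin d) ℝ) - B ^ (n+1) = (1 - B) + B * (1 - B ^ n) := by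
      rw [mul_sub, mul_one, pow_succ']; abel
    rw [key]
    refine h1B.add ?_
    obtain ⟨C, hCH, hCC⟩ : ∃ C : Matrix (Fin d) (Fin d) ℝ, Cᴴ = C ∧ C * C = B :=
      ⟨CFC.sqrt B, (CFC.sqrt_nonneg B).posSemidef.isHermitian.eq, CFC.sqrt_mul_sqrt_self B hB.nonneg⟩
    have hcomm : C * B ^ n = B ^ n * C := by
      have h1 : Commute C B := by rw [← hCC]; exact (Commute.refl C).mul_right (Commute.refl C)
      exact (h1.pow_right n).eq
    have hrw : Cᴴ * (1 - B ^ n) * C = B * (1 - B ^ n) := by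
      calc Cᴴ * (1 - B ^ n) * C = (C * 1 - C * B ^ n) * C := by rw [hCH, mul_sub]
        _ = C * C - C * B ^ n * C := by rw [sub_mul, mul_one]
        _ = B - B ^ n * B := by rw [hCC, hcomm, mul_assoc, hCC]
        _ = B * (1 - B ^ n) := by rw [mul_sub, mul_one, ← pow_succ, ← pow_succ']
    rw [← hrw]
    exact ih.conjTranspose_mul_mul_same C

theorem bias_bound (d : ℕ) (H : Matrix (Fin d) (Fin d) ℝ)
    (hH : H.PosSemidef) (α : ℝ) (hα : 0 < α)
    (hle : ((1 : Matrix (Fin d) (Fin d) ℝ) - α • H).PosSemidef)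
    (θs : Fin d → ℝ) (a : ℕ → (Fin d → ℝ))
    (ha : ∀ k, a k = ((1 : Matrix (Fin d) (Fin d) ℝ) - (1 - α • H) ^ k) *ᵥ θs)
    (abar : ℕ → (Fin d → ℝ))
    (habar : ∀ k, abar k = (k : ℝ)⁻¹ • ∑ i ∈ Finset.range k, a i) :
    ∀ k : ℕ, 1 ≤ k →
      (abar k - θs) ⬝ᵥ H *ᵥ (abar k - θs) ≤ (θs ⬝ᵥ θs) / (α * k) := by
  intro k hk
  have hk0 : (0:ℝ) < (k:ℝ) := by exact_mod_cast hk
  set B : Matrix (Fin d) (Fin d) ℝ := 1 - α • H with hBdef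
  have hBpsd : B.PosSemidef := hle
  have hαH : (1 : Matrix (Fin d) (Fin d) ℝ) - B = α • H := by rw [hBdef]; abel
  have h1B : ((1 : Matrix (Fin d) (Fin d) ℝ) - B).PosSemidef := by
    rw [hαH]; exact psd_smul hH hα.le
  set S : Matrix (Fin d) (Fin d) ℝ := ∑ i ∈ Finset.range k, B ^ i with hSdef
  have hSsymm : Sᴴ = S := by
    rw [hSdef]
    simp only [Matrix.conjTranspose_sum]
    exact Finset.sum_congr rfl fun i _ => (hBpsd.isHermitian.pow i).eq
  have hgeom : S * ((1 : Matrix (Fin d) (Fin d) ℝ) - B) = 1 - B ^ k := by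
    have h := geom_sum_mul B k
    rw [hSdef]
    rw [show (1 : Matrix (Fin d) (Fin d) ℝ) - B = -(B - 1) by abel, mul_neg, h]
    abel
  have hsum : ∑ i ∈ Finset.range k, a i = (k:ℝ) • θs - S *ᵥ θs := by
    have h2 : ∀ i, a i = θs - B ^ i *ᵥ θs := by
      intro i; rw [ha i, Matrix.sub_mulVec, Matrix.one_mulVec]
    simp only [h2, Finset.sum_sub_distrib, Finset.sum_const, Finset.card_range,
      hSdef, sum_mulVec']
    rw [Nat.cast_smul_eq_nsmul]
  have hv : abar k - θs = -((k:ℝ)⁻¹ • (S *ᵥ θs)) := by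
    rw [habar k, hsum, smul_sub, smul_smul, inv_mul_cancel₀ hk0.ne', one_smul]
    abel
  have hMsum : (k:ℝ) • (1 : Matrix (Fin d) (Fin d) ℝ) - (1 - B ^ k) * S
      = ∑ i ∈ Finset.range k, (((1 : Matrix (Fin d) (Fin d) ℝ) - B ^ i) + B ^ (k + i)) := by
    rw [hSdef, Finset.mul_sum]
    have h1 : ∀ i, ((1 : Matrix (Fin d) (Fin d) ℝ) - B ^ k) * B ^ i = B ^ i - B ^ (k + i) := by
      intro i; rw [sub_mul, one_mul, pow_add]
    simp only [h1, Finset.sum_add_distrib, Finset.sum_sub_distrib, Finset.sum_const,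
      Finset.card_range, Nat.cast_smul_eq_nsmul (R := ℝ)]
    abel
  have hMpsd : ((k:ℝ) • (1 : Matrix (Fin d) (Fin d) ℝ) - (1 - B ^ k) * S).PosSemidef := by
    rw [hMsum]
    refine Finset.sum_induction _ _ (fun A B hA hB => hA.add hB) Matrix.PosSemidef.zero ?_
    intro i _
    exact (one_sub_pow_psd hBpsd h1B i).add (hBpsd.pow (k + i))
  have hαSHS : α • (S * H * S) = (1 - B ^ k) * S := by
    have h3 : α • (S * H * S) = S * (α • H) * S := by
      rw [Matrix.mul_smul, Matrix.smul_mul]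
    rw [h3, ← hαH, hgeom]
  have hquad := hMpsd.dotProduct_mulVec_nonneg θs
  rw [star_trivial, Matrix.sub_mulVec, dotProduct_sub, ← hαSHS] at hquad
  have hkey : α * (θs ⬝ᵥ (S * H * S) *ᵥ θs) ≤ (k:ℝ) * (θs ⬝ᵥ θs) := by
    have h1 : θs ⬝ᵥ ((k:ℝ) • (1 : Matrix (Fin d) (Fin d) ℝ)) *ᵥ θs = (k:ℝ) * (θs ⬝ᵥ θs) := by
      rw [Matrix.smul_mulVec, dotProduct_smul, Matrix.one_mulVec, smul_eq_mul]
    have h2 : θs ⬝ᵥ (α • (S * H * S)) *ᵥ θs = α * (θs ⬝ᵥ (S * H * S) *ᵥ θs) := by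
      rw [Matrix.smul_mulVec, dotProduct_smul, smul_eq_mul]
    rw [h1, h2] at hquad
    linarith
  have hLHS : (abar k - θs) ⬝ᵥ H *ᵥ (abar k - θs)
      = (k:ℝ)⁻¹ * ((k:ℝ)⁻¹ * (θs ⬝ᵥ (S * H * S) *ᵥ θs)) := by
    rw [hv]
    rw [Matrix.mulVec_neg, Matrix.mulVec_smul, dotProduct_neg, neg_dotProduct, neg_neg,
      smul_dotProduct, dotProduct_smul, smul_eq_mul, smul_eq_mul]
    congr 1
    congr 1
    rw [← Matrix.mulVec_mulVec, ← Matrix.mulVec_mulVec]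
    rw [Matrix.dotProduct_mulVec θs S, ← Matrix.mulVec_transpose]
    rw [show Sᵀ = S from hSsymm, Matrix.dotProduct_mulVec (S *ᵥ θs) H,
      ← Matrix.mulVec_transpose]
  rw [hLHS]
  set q : ℝ := θs ⬝ᵥ (S * H * S) *ᵥ θs with hq
  rw [le_div_iff₀ (by positivity : (0:ℝ) < α * k)]
  have h3 : (k:ℝ)⁻¹ * ((k:ℝ)⁻¹ * q) * (α * k) = (α * q) * (k:ℝ)⁻¹ := by
    field_simp
  rw [h3]
  calc (α * q) * (k:ℝ)⁻¹ ≤ ((k:ℝ) * (θs ⬝ᵥ θs)) * (k:ℝ)⁻¹ :=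
        mul_le_mul_of_nonneg_right hkey (by positivity)
    _ = θs ⬝ᵥ θs := by field_simp
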